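/- Let F be a tileable figure with equilibrium function eq and base vertex w₀, and let h_min and h_max denote the minimal and maximal elements of the finite distributive lattice (H_F,≤). For every forced component U of F with U≠U_∞ and every vertex v of U, one has h_min(v)≠h_max(v). -/

import Mathlib

open Classical

noncomputable section

abbrev Vtx : Type := ℤ × ℤ
abbrev GArc : Type := Vtx × Vtx

/-- `a` is an arc of the grid graph `Λ⁺`: its endpoints differ by a unit vector. -/
def IsArc (a : GArc) : Prop :=
  (a.2.1 - a.1.1).natAbs + (a.2.2 - a.1.2).natAbs = 1

/-- reversal of an arc -/
def arev (a : GArc) : GArc := (a.2, a.1)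

/-- `+1` if the cell with lower-left corner `c` is black, `-1` if it is white
(checkerboard coloring). -/
def colorSign (c : Vtx) : ℤ := if (c.1 + c.2) % 2 = 0 then 1 else -1

/-- spin of an arc: `+1` if a traveler along the arc has a white cell on its left,
`-1` otherwise. -/
def sp (a : GArc) : ℤ :=
  colorSign a.1 * ((a.2.2 - a.1.2) ^ 2 - (a.2.1 - a.1.1) ^ 2)

/-- the arcs of a path/cycle given by its list of vertices -/
def arcsOf (C : List Vtx) : List GArc := C.zip C.tail

/-- sum of a function `g` on arcs over all the arcs of `C` (with multiplicity) -/
def sumOn (g : GArc → ℤ) (C : List Vtx) : ℤ := ((arcsOf C).map g).sum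

/-- a (closed) cycle of the grid -/
def IsCycle (C : List Vtx) : Prop :=
  2 ≤ C.length ∧ C.head? = C.getLast? ∧ ∀ a ∈ arcsOf C, IsArc a

/-- an elementary cycle: no repeated vertex except the endpoints -/
def IsElemCycle (C : List Vtx) : Prop := IsCycle C ∧ C.dropLast.Nodup

/-- contribution of an arc to the winding number of a cycle around the center of
cell `c` (crossings of the horizontal ray going East from the center of `c`). -/
def windTerm (c : Vtx) (a : GArc) : ℤ :=
  if a.1.1 = a.2.1 ∧ c.1 < a.1.1 ∧ min a.1.2 a.2.2 = c.2 then a.2.2 - a.1.2 else 0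

/-- winding number of the cycle `C` around the center of the cell `c` -/
def wind (C : List Vtx) (c : Vtx) : ℤ := sumOn (windTerm c) C

/-- a cycle is clockwise when its winding number around any cell is nonpositive
(`-1` on enclosed cells, `0` elsewhere) -/
def IsClockwise (C : List Vtx) : Prop := ∀ c : Vtx, wind C c ≤ 0

/-- a cell is enclosed by `C` when the winding number of `C` around it is nonzero -/
def Encloses (C : List Vtx) (c : Vtx) : Prop := wind C c ≠ 0

/-- number of black cells minus number of white cells enclosed by a clockwise cycle -/
def Dis (C : List Vtx) : ℤ := -∑ᶠ c : Vtx, wind C c * colorSign c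

/-- 4-adjacency of cells (shared edge) -/
def adj4 (c c' : Vtx) : Prop := (c'.1 - c.1).natAbs + (c'.2 - c.2).natAbs = 1

/-- 8-adjacency of cells (shared vertex at least) -/
def adj8 (c c' : Vtx) : Prop := c ≠ c' ∧ (c'.1 - c.1).natAbs ≤ 1 ∧ (c'.2 - c.2).natAbs ≤ 1

/-- a figure: a nonempty, finite, 4-connected set of cells such that no vertex has
all its incident edges on the boundary (no diagonal pinch, so no vertex
duplication is needed). -/
def IsFigure (F : Finset Vtx) : Prop :=
  F.Nonempty ∧
  (∀ c ∈ F, ∀ c' ∈ F, Relation.ReflTransGen (fun x y => x ∈ F ∧ y ∈ F ∧ adj4 x y) c c') ∧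
  (∀ x y : ℤ,
    ¬((x - 1, y - 1) ∈ F ∧ (x, y) ∈ F ∧ (x, y - 1) ∉ F ∧ (x - 1, y) ∉ F) ∧
    ¬((x, y - 1) ∈ F ∧ (x - 1, y) ∈ F ∧ (x - 1, y - 1) ∉ F ∧ (x, y) ∉ F))

/-- one of the two cells adjacent to the edge `[a]` -/
def cellA (a : GArc) : Vtx :=
  if a.1.2 = a.2.2 then (min a.1.1 a.2.1, a.1.2) else (a.1.1, min a.1.2 a.2.2)

/-- the other cell adjacent to the edge `[a]` -/
def cellB (a : GArc) : Vtx :=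
  if a.1.2 = a.2.2 then (min a.1.1 a.2.1, a.1.2 - 1) else (a.1.1 - 1, min a.1.2 a.2.2)

/-- arcs of the graph `G_F`: the edge `[a]` is a side of a cell of `F` -/
def ArcF (F : Finset Vtx) (a : GArc) : Prop := IsArc a ∧ (cellA a ∈ F ∨ cellB a ∈ F)

/-- boundary arcs of `F`: exactly one of the two adjacent cells is in `F` -/
def BoundaryArcF (F : Finset Vtx) (a : GArc) : Prop :=
  IsArc a ∧ ¬(cellA a ∈ F ↔ cellB a ∈ F)

/-- interior arcs of `F`: both adjacent cells are in `F` -/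
def InteriorArcF (F : Finset Vtx) (a : GArc) : Prop :=
  IsArc a ∧ cellA a ∈ F ∧ cellB a ∈ F

/-- `v` is a corner of the cell with lower-left corner `c` -/
def isCorner (v c : Vtx) : Prop :=
  (v.1 = c.1 ∨ v.1 = c.1 + 1) ∧ (v.2 = c.2 ∨ v.2 = c.2 + 1)

/-- vertices of `G_F`: the corners of the cells of `F` -/
def VF (F : Finset Vtx) : Set Vtx := {v | ∃ c ∈ F, isCorner v c}

/-- a cycle of the graph `G_F` -/
def IsCycleF (F : Finset Vtx) (C : List Vtx) : Prop :=
  2 ≤ C.length ∧ C.head? = C.getLast? ∧ ∀ a ∈ arcsOf C, ArcF F a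

/-- an elementary cycle of the graph `G_F` -/
def IsElemCycleF (F : Finset Vtx) (C : List Vtx) : Prop :=
  IsCycleF F C ∧ C.dropLast.Nodup

/-- number of black cells of `F` minus number of white cells of `F` enclosed by
the clockwise cycle `C` -/
def DisF (F : Finset Vtx) (C : List Vtx) : ℤ := -∑ c ∈ F, wind C c * colorSign c

/-- `ef` is skew-symmetric on the arcs of `G_F` -/
def IsSkewOnF (F : Finset Vtx) (ef : GArc → ℤ) : Prop :=
  ∀ a, ArcF F a → ef (arev a) = -ef a

/-- an equilibrium function of the figure `F` -/
def IsEquilibrium (F : Finset Vtx) (ef : GArc → ℤ) : Prop :=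
  IsSkewOnF F ef ∧
  ∀ C, IsElemCycleF F C → IsClockwise C → sumOn sp C + sumOn ef C = 4 * DisF F C

/-- the four sides of the cell `c`, as canonically oriented arcs -/
def sides (c : Vtx) : List GArc :=
  [((c.1, c.2), (c.1 + 1, c.2)), ((c.1, c.2 + 1), (c.1 + 1, c.2 + 1)),
   ((c.1, c.2), (c.1, c.2 + 1)), ((c.1 + 1, c.2), (c.1 + 1, c.2 + 1))]

/-- a domino tiling of `F`, encoded by the symmetric set `D` of the arcs whose
underlying edges are the central axes of its dominoes: every central axis has
both of its adjacent cells in `F` (dominoes are included in `F`), and every cell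
of `F` is covered by exactly one domino (exactly one of its sides is a central
axis): no overlap and no gap. -/
def IsTiling (F : Finset Vtx) (D : Set GArc) : Prop :=
  (∀ a ∈ D, arev a ∈ D) ∧
  (∀ a ∈ D, IsArc a ∧ cellA a ∈ F ∧ cellB a ∈ F) ∧
  (∀ c ∈ F, ∃! a, a ∈ sides c ∧ a ∈ D)

/-- characteristic function of a tiling: `1` on central axes, `0` elsewhere -/
def chi (D : Set GArc) (a : GArc) : ℤ := if a ∈ D then 1 else 0

/-- the height difference function of a tiling -/
def gT (ef : GArc → ℤ) (D : Set GArc) (a : GArc) : ℤ :=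
  ef a - sp a + 2 * sp a * (1 - 2 * chi D a)

/-- the function `t`: `eq(a)-sp(a)+2` on interior arcs, `eq(a)+sp(a)` on boundary arcs -/
def tArc (F : Finset Vtx) (ef : GArc → ℤ) (a : GArc) : ℤ :=
  if cellA a ∈ F ∧ cellB a ∈ F then ef a - sp a + 2 else ef a + sp a

/-- the function `b`: `eq(a)-sp(a)-2` on interior arcs, `eq(a)+sp(a)` on boundary arcs -/
def bArc (F : Finset Vtx) (ef : GArc → ℤ) (a : GArc) : ℤ :=
  if cellA a ∈ F ∧ cellB a ∈ F then ef a - sp a - 2 else ef a + sp a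

/-- the 8-connected component of the cell `c` in the complement of `F` -/
def comp8 (F : Finset Vtx) (c : Vtx) : Set Vtx :=
  {c' | Relation.ReflTransGen (fun x y => x ∉ F ∧ y ∉ F ∧ adj8 x y) c c'}

/-- `c` belongs to a hole of `F` (a finite 8-connected component of the complement) -/
def IsHoleCell (F : Finset Vtx) (c : Vtx) : Prop := c ∉ F ∧ (comp8 F c).Finite

/-- `c` belongs to `H_∞`, the infinite 8-connected component of the complement -/
def IsHinfCell (F : Finset Vtx) (c : Vtx) : Prop := c ∉ F ∧ ¬(comp8 F c).Finite

/-- `w` is a vertex of `V_F` on the boundary of `H_∞` -/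
def OnOuterBoundary (F : Finset Vtx) (w : Vtx) : Prop :=
  w ∈ VF F ∧ ∃ c, IsHinfCell F c ∧ isCorner w c

/-- vertices on the boundary of `F` -/
def Vb (F : Finset Vtx) : Set Vtx :=
  {v | (∃ c ∈ F, isCorner v c) ∧ ∃ c, c ∉ F ∧ isCorner v c}

/-- `h` belongs to the class `H_F` of height functions -/
def InHF (F : Finset Vtx) (ef : GArc → ℤ) (w0 : Vtx) (h : Vtx → ℤ) : Prop :=
  h w0 = 0 ∧ ∀ a, ArcF F a →
    (h a.2 - h a.1 = bArc F ef a ∨ h a.2 - h a.1 = tArc F ef a)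

/-- `h` is the height function induced by the tiling `D` (based at `w0`) -/
def IsHeightOf (F : Finset Vtx) (ef : GArc → ℤ) (D : Set GArc) (w0 : Vtx)
    (h : Vtx → ℤ) : Prop :=
  h w0 = 0 ∧ ∀ a, ArcF F a → h a.2 - h a.1 = gT ef D a

/-- a critical cycle: an elementary cycle of `G_F` with `t(C) = 0` -/
def CriticalCycle (F : Finset Vtx) (ef : GArc → ℤ) (C : List Vtx) : Prop :=
  IsElemCycleF F C ∧ sumOn (tArc F ef) C = 0

/-- a strongly critical cycle: critical, and `sp(a) = 1` on all its interior arcs -/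
def StronglyCriticalCycle (F : Finset Vtx) (ef : GArc → ℤ) (C : List Vtx) : Prop :=
  CriticalCycle F ef C ∧ ∀ a ∈ arcsOf C, InteriorArcF F a → sp a = 1

/-- two vertices are critically equivalent when some critical cycle passes
through both -/
def critRel (F : Finset Vtx) (ef : GArc → ℤ) (v v' : Vtx) : Prop :=
  ∃ C, CriticalCycle F ef C ∧ v ∈ C ∧ v' ∈ C

/-- the forced component of the vertex `v` (class of the equivalence relation
generated by critical equivalence) -/
def fcomp (F : Finset Vtx) (ef : GArc → ℤ) (v : Vtx) : Set Vtx :=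
  {v' | v' ∈ VF F ∧ Relation.EqvGen (critRel F ef) v v'}

/-- `S` is a forced component of `F` -/
def IsForcedComponent (F : Finset Vtx) (ef : GArc → ℤ) (S : Set Vtx) : Prop :=
  ∃ v ∈ VF F, S = fcomp F ef v

/-- `a` is an arc of the graph `G_T` of the tiling `D` -/
def GTArc (F : Finset Vtx) (ef : GArc → ℤ) (D : Set GArc) (a : GArc) : Prop :=
  ArcF F a ∧ gT ef D a = tArc F ef a

/-- there is a directed path in `G_T` from `u` to `v` -/
def GTReach (F : Finset Vtx) (ef : GArc → ℤ) (D : Set GArc) (u v : Vtx) : Prop :=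
  Relation.ReflTransGen (fun x y => GTArc F ef D (x, y)) u v

/-- the result of an upward flip on the component `S`: add `4` on `S` -/
def flipUpAt (S : Set Vtx) (h : Vtx → ℤ) : Vtx → ℤ :=
  fun v => h v + S.indicator (fun _ => (4 : ℤ)) v

/-- the result of a downward flip on the component `S`: subtract `4` on `S` -/
def flipDownAt (S : Set Vtx) (h : Vtx → ℤ) : Vtx → ℤ :=
  fun v => h v - S.indicator (fun _ => (4 : ℤ)) v

/-- `|h(v_S) - h'(v_S)|` for a representative `v_S` of `S` -/
def compDiff (h h' : Vtx → ℤ) (S : Set Vtx) : ℤ :=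
  if hS : S.Nonempty then |h hS.some - h' hS.some| else 0

/-- the distance `Δ(h,h') = Σ_U |h(v_U) - h'(v_U)|` over forced components `U` -/
def Delta (F : Finset Vtx) (ef : GArc → ℤ) (h h' : Vtx → ℤ) : ℤ :=
  ∑ᶠ S ∈ {S : Set Vtx | IsForcedComponent F ef S}, compDiff h h' S

/-- a sequence of `n` allowed upward flips at forced components distinct from `U_∞` -/
def UpFlipSeq (F : Finset Vtx) (ef : GArc → ℤ) (w0 : Vtx) (f : ℕ → Vtx → ℤ)
    (n : ℕ) : Prop :=
  ∀ i < n, ∃ S, IsForcedComponent F ef S ∧ S ≠ fcomp F ef w0 ∧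
    InHF F ef w0 (f i) ∧ InHF F ef w0 (f (i + 1)) ∧ f (i + 1) = flipUpAt S (f i)

/-- a sequence of `n` allowed (upward or downward) flips, flipping at step `i`
the forced component `s i` (distinct from `U_∞`) -/
def FlipSeq (F : Finset Vtx) (ef : GArc → ℤ) (w0 : Vtx) (f : ℕ → Vtx → ℤ)
    (s : ℕ → Set Vtx) (n : ℕ) : Prop :=
  ∀ i < n, IsForcedComponent F ef (s i) ∧ s i ≠ fcomp F ef w0 ∧
    InHF F ef w0 (f i) ∧ InHF F ef w0 (f (i + 1)) ∧
    (f (i + 1) = flipUpAt (s i) (f i) ∨ f (i + 1) = flipDownAt (s i) (f i))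

/-- the four arcs of the two horizontal edges through `v` (central axes of the
pair of vertical dominoes covering the 2×2 square centered at `v`) -/
def hPairAxes (v : Vtx) : Set GArc :=
  {((v.1 - 1, v.2), v), (v, (v.1 - 1, v.2)), (v, (v.1 + 1, v.2)), ((v.1 + 1, v.2), v)}

/-- the four arcs of the two vertical edges through `v` (central axes of the
pair of horizontal dominoes covering the 2×2 square centered at `v`) -/
def vPairAxes (v : Vtx) : Set GArc :=
  {((v.1, v.2 - 1), v), (v, (v.1, v.2 - 1)), (v, (v.1, v.2 + 1)), ((v.1, v.2 + 1), v)}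

/-- a local flip: replace the pair of dominoes covering a 2×2 square by the
other pair covering the same square -/
def LocalFlip (D D' : Set GArc) : Prop :=
  ∃ v : Vtx, (hPairAxes v ⊆ D ∧ D' = (D \ hPairAxes v) ∪ vPairAxes v) ∨
             (vPairAxes v ⊆ D ∧ D' = (D \ vPairAxes v) ∪ hPairAxes v)

/-- a sequence of `n` local flips between tilings of `F` -/
def LocalFlipSeq (F : Finset Vtx) (g : ℕ → Set GArc) (n : ℕ) : Prop :=
  ∀ i < n, IsTiling F (g i) ∧ IsTiling F (g (i + 1)) ∧ LocalFlip (g i) (g (i + 1))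

/-- `h` is a maximal element of `(H_F, ≤)` -/
def MaximalInHF (F : Finset Vtx) (ef : GArc → ℤ) (w0 : Vtx) (h : Vtx → ℤ) : Prop :=
  InHF F ef w0 h ∧ ∀ h', InHF F ef w0 h' →
    (∀ v ∈ VF F, h v ≤ h' v) → ∀ v ∈ VF F, h' v = h v

/-- `h` is a minimal element of `(H_F, ≤)` -/
def MinimalInHF (F : Finset Vtx) (ef : GArc → ℤ) (w0 : Vtx) (h : Vtx → ℤ) : Prop :=
  InHF F ef w0 h ∧ ∀ h', InHF F ef w0 h' →
    (∀ v ∈ VF F, h' v ≤ h v) → ∀ v ∈ VF F, h' v = h v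

/-- an elementary cycle of `G_F` enclosing a single cell of `F` -/
def AroundSingleCell (F : Finset Vtx) (C : List Vtx) : Prop :=
  IsElemCycleF F C ∧ ∃ c ∈ F, ∀ c' : Vtx, wind C c' ≠ 0 ↔ c' = c

/-- a cycle of `G_F` following clockwise the boundary of a hole of `F`: it
winds `-1` around each cell of the hole and `0` around every other cell -/
def IsClockwiseHoleContour (F : Finset Vtx) (C : List Vtx) : Prop :=
  IsElemCycleF F C ∧ ∃ c₀, IsHoleCell F c₀ ∧
    (∀ c ∈ comp8 F c₀, wind C c = -1) ∧ (∀ c ∉ comp8 F c₀, wind C c = 0)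

end
section Aux

open Relation List

/-- case analysis for arcs -/
lemma arc_cases {x y x' y' : ℤ} (h : IsArc ((x,y),(x',y'))) :
    (x' = x+1 ∧ y' = y) ∨ (x' = x-1 ∧ y' = y) ∨ (x' = x ∧ y' = y+1) ∨ (x' = x ∧ y' = y-1) := by
  simp only [IsArc] at h; omega

lemma isArc_rev {a : GArc} (h : IsArc a) : IsArc (arev a) := by
  simp only [IsArc, arev] at h ⊢; omega

lemma arev_arev (a : GArc) : arev (arev a) = a := rfl

lemma cellA_rev {a : GArc} (h : IsArc a) : cellA (arev a) = cellA a := by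
  obtain ⟨⟨x, y⟩, ⟨x', y'⟩⟩ := a
  rcases arc_cases h with ⟨rfl, rfl⟩ | ⟨rfl, rfl⟩ | ⟨rfl, rfl⟩ | ⟨rfl, rfl⟩ <;>
    · simp only [cellA, arev, min_def]
      split_ifs <;> simp only [Prod.mk.injEq] <;> omega

lemma cellB_rev {a : GArc} (h : IsArc a) : cellB (arev a) = cellB a := by
  obtain ⟨⟨x, y⟩, ⟨x', y'⟩⟩ := a
  rcases arc_cases h with ⟨rfl, rfl⟩ | ⟨rfl, rfl⟩ | ⟨rfl, rfl⟩ | ⟨rfl, rfl⟩ <;>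
    · simp only [cellB, arev, min_def]
      split_ifs <;> simp only [Prod.mk.injEq] <;> omega

lemma sp_rev {a : GArc} (h : IsArc a) : sp (arev a) = - sp a := by
  obtain ⟨⟨x, y⟩, ⟨x', y'⟩⟩ := a
  rcases arc_cases h with ⟨rfl, rfl⟩ | ⟨rfl, rfl⟩ | ⟨rfl, rfl⟩ | ⟨rfl, rfl⟩ <;>
    · simp only [sp, arev, colorSign]
      split_ifs <;> ring_nf <;> omega

lemma arcF_rev {F : Finset Vtx} {a : GArc} (h : ArcF F a) : ArcF F (arev a) := by
  refine ⟨isArc_rev h.1, ?_⟩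
  rw [cellA_rev h.1, cellB_rev h.1]; exact h.2

lemma t_rev {F : Finset Vtx} {ef : GArc → ℤ} (hsk : IsSkewOnF F ef) {a : GArc}
    (h : ArcF F a) : tArc F ef (arev a) = - bArc F ef a := by
  have h1 := cellA_rev h.1
  have h2 := cellB_rev h.1
  have h3 := sp_rev h.1
  have h4 := hsk a h
  simp only [tArc, bArc, h1, h2, h3, h4]
  split_ifs <;> ring

lemma b_rev {F : Finset Vtx} {ef : GArc → ℤ} (hsk : IsSkewOnF F ef) {a : GArc}
    (h : ArcF F a) : bArc F ef (arev a) = - tArc F ef a := by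
  have := t_rev hsk (arcF_rev h)
  rw [arev_arev] at this; omega

lemma b_le_t {F : Finset Vtx} {ef : GArc → ℤ} (a : GArc) : bArc F ef a ≤ tArc F ef a := by
  simp only [tArc, bArc]; split_ifs <;> omega

lemma b_eq_t_of_not_interior {F : Finset Vtx} {ef : GArc → ℤ} {a : GArc}
    (h : ¬(cellA a ∈ F ∧ cellB a ∈ F)) : bArc F ef a = tArc F ef a := by
  simp only [tArc, bArc, if_neg h]

lemma t_sub_four {F : Finset Vtx} {ef : GArc → ℤ} {a : GArc}
    (h : cellA a ∈ F ∧ cellB a ∈ F) : bArc F ef a = tArc F ef a - 4 := by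
  simp only [tArc, bArc, if_pos h]; ring

/-- endpoints of arcs of `G_F` are vertices of `V_F` -/
lemma arcF_mem_VF {F : Finset Vtx} {a : GArc} (h : ArcF F a) :
    a.1 ∈ VF F ∧ a.2 ∈ VF F := by
  obtain ⟨⟨x, y⟩, ⟨x', y'⟩⟩ := a
  obtain ⟨ha, hc⟩ := h
  rcases hc with hc | hc <;>
  constructor <;>
  refine ⟨_, hc, ?_⟩ <;>
  rcases arc_cases ha with ⟨rfl, rfl⟩ | ⟨rfl, rfl⟩ | ⟨rfl, rfl⟩ | ⟨rfl, rfl⟩ <;>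
  simp only [cellA, cellB, isCorner, min_def] <;>
  split_ifs <;> simp <;> omega

/-- the relation: the arc `(p,q)` is in `G_F` and `h` takes the value `t` on it -/
def TRel (F : Finset Vtx) (ef : GArc → ℤ) (h : Vtx → ℤ) (p q : Vtx) : Prop :=
  ArcF F (p, q) ∧ h q - h p = tArc F ef (p, q)

/-- the relation: the arc `(p,q)` is in `G_F` and `h` takes the value `b` on it -/
def BRel (F : Finset Vtx) (ef : GArc → ℤ) (h : Vtx → ℤ) (p q : Vtx) : Prop :=
  ArcF F (p, q) ∧ h q - h p = bArc F ef (p, q)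

end Aux
section Aux2

open Relation List

/-- every vertex of `V_F` reaches `w0` along arcs where `hmin` takes `t` -/
lemma min_reach {F : Finset Vtx} {ef : GArc → ℤ} (hsk : IsSkewOnF F ef) {w0 : Vtx}
    {hmin : Vtx → ℤ} (h1 : InHF F ef w0 hmin)
    (hminle : ∀ h : Vtx → ℤ, InHF F ef w0 h → ∀ v ∈ VF F, hmin v ≤ h v) :
    ∀ x ∈ VF F, Relation.ReflTransGen (TRel F ef hmin) x w0 := by
  classical
  set R : Vtx → Prop := fun x => Relation.ReflTransGen (TRel F ef hmin) x w0 with hR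
  set h'' : Vtx → ℤ := fun x => if R x then hmin x else hmin x - 4 with hh
  have hstep : ∀ p q : Vtx, ArcF F (p, q) → hmin q - hmin p = bArc F ef (p, q) → R p → R q := by
    intro p q ha hb hp
    have harev : ArcF F (q, p) := arcF_rev (a := (p, q)) ha
    have ht : hmin p - hmin q = tArc F ef (q, p) := by
      have := t_rev hsk (a := (p, q)) ha
      simp only [arev] at this; omega
    exact Relation.ReflTransGen.head ⟨harev, ht⟩ hp
  have hIn : InHF F ef w0 h'' := by
    constructor
    · simp only [hh, if_pos (show R w0 from Relation.ReflTransGen.refl)]; exact h1.1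
    · intro a ha
      obtain hbt := h1.2 a ha
      have hpq : a = (a.1, a.2) := rfl
      by_cases hp : R a.1 <;> by_cases hq : R a.2
      · simpa only [hh, if_pos hp, if_pos hq] using hbt
      · -- p reaches, q does not : hmin takes t, and the arc is interior
        have hdt : hmin a.2 - hmin a.1 = tArc F ef a := by
          rcases hbt with hb | ht
          · exact absurd (hstep a.1 a.2 (hpq ▸ ha) hb hp) hq
          · exact ht
        have hint : cellA a ∈ F ∧ cellB a ∈ F := by
          by_contra hni
          have hb : hmin a.2 - hmin a.1 = bArc F ef a := by
            rw [hdt, ← b_eq_t_of_not_interior (ef := ef) hni]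
          exact hq (hstep a.1 a.2 (hpq ▸ ha) hb hp)
        left
        simp only [hh, if_pos hp, if_neg hq]
        rw [t_sub_four hint] ; omega
      · -- q reaches, p does not : hmin takes b, and the arc is interior
        have hdb : hmin a.2 - hmin a.1 = bArc F ef a := by
          rcases hbt with hb | ht
          · exact hb
          · exact absurd (Relation.ReflTransGen.head ⟨hpq ▸ ha, ht⟩ hq) hp
        have hint : cellA a ∈ F ∧ cellB a ∈ F := by
          by_contra hni
          have ht : hmin a.2 - hmin a.1 = tArc F ef a := by
            rw [hdb, b_eq_t_of_not_interior (ef := ef) hni]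
          exact hp (Relation.ReflTransGen.head ⟨hpq ▸ ha, ht⟩ hq)
        right
        simp only [hh, if_neg hp, if_pos hq]
        rw [t_sub_four hint] at hdb ; omega
      · simp only [hh, if_neg hp, if_neg hq]
        rcases hbt with hb | ht
        · left; omega
        · right; omega
  intro x hx
  by_contra hxA
  have := hminle h'' hIn x hx
  simp only [hh, if_neg (show ¬ R x from hxA)] at this
  omega

/-- every vertex of `V_F` reaches `w0` along arcs where `hmax` takes `b` -/
lemma max_reach {F : Finset Vtx} {ef : GArc → ℤ} (hsk : IsSkewOnF F ef) {w0 : Vtx}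
    {hmax : Vtx → ℤ} (h2 : InHF F ef w0 hmax)
    (hmaxge : ∀ h : Vtx → ℤ, InHF F ef w0 h → ∀ v ∈ VF F, h v ≤ hmax v) :
    ∀ x ∈ VF F, Relation.ReflTransGen (BRel F ef hmax) x w0 := by
  classical
  set R : Vtx → Prop := fun x => Relation.ReflTransGen (BRel F ef hmax) x w0 with hR
  set h'' : Vtx → ℤ := fun x => if R x then hmax x else hmax x + 4 with hh
  have hstep : ∀ p q : Vtx, ArcF F (p, q) → hmax q - hmax p = tArc F ef (p, q) → R p → R q := by
    intro p q ha ht hp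
    have harev : ArcF F (q, p) := arcF_rev (a := (p, q)) ha
    have hb : hmax p - hmax q = bArc F ef (q, p) := by
      have := b_rev hsk (a := (p, q)) ha
      simp only [arev] at this; omega
    exact Relation.ReflTransGen.head ⟨harev, hb⟩ hp
  have hIn : InHF F ef w0 h'' := by
    constructor
    · simp only [hh, if_pos (show R w0 from Relation.ReflTransGen.refl)]; exact h2.1
    · intro a ha
      obtain hbt := h2.2 a ha
      have hpq : a = (a.1, a.2) := rfl
      by_cases hp : R a.1 <;> by_cases hq : R a.2
      · simpa only [hh, if_pos hp, if_pos hq] using hbt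
      · -- p reaches, q does not : hmax takes b, and the arc is interior
        have hdb : hmax a.2 - hmax a.1 = bArc F ef a := by
          rcases hbt with hb | ht
          · exact hb
          · exact absurd (hstep a.1 a.2 (hpq ▸ ha) ht hp) hq
        have hint : cellA a ∈ F ∧ cellB a ∈ F := by
          by_contra hni
          have ht : hmax a.2 - hmax a.1 = tArc F ef a := by
            rw [hdb, b_eq_t_of_not_interior (ef := ef) hni]
          exact hq (hstep a.1 a.2 (hpq ▸ ha) ht hp)
        right
        simp only [hh, if_pos hp, if_neg hq]
        rw [t_sub_four hint] at hdb ; omega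
      · -- q reaches, p does not : hmax takes t, and the arc is interior
        have hdt : hmax a.2 - hmax a.1 = tArc F ef a := by
          rcases hbt with hb | ht
          · exact absurd (Relation.ReflTransGen.head ⟨hpq ▸ ha, hb⟩ hq) hp
          · exact ht
        have hint : cellA a ∈ F ∧ cellB a ∈ F := by
          by_contra hni
          have hb : hmax a.2 - hmax a.1 = bArc F ef a := by
            rw [hdt, ← b_eq_t_of_not_interior (ef := ef) hni]
          exact hp (Relation.ReflTransGen.head ⟨hpq ▸ ha, hb⟩ hq)
        left
        simp only [hh, if_neg hp, if_pos hq]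
        rw [t_sub_four hint] ; omega
      · simp only [hh, if_neg hp, if_neg hq]
        rcases hbt with hb | ht
        · left; omega
        · right; omega
  intro x hx
  by_contra hxA
  have := hmaxge h'' hIn x hx
  simp only [hh, if_neg (show ¬ R x from hxA)] at this
  omega

end Aux2
section Aux3

open Relation List

lemma arcsOf_nil : arcsOf [] = [] := rfl
lemma arcsOf_single (x : Vtx) : arcsOf [x] = [] := rfl
lemma arcsOf_cons (x y : Vtx) (l : List Vtx) :
    arcsOf (x :: y :: l) = (x, y) :: arcsOf (y :: l) := rfl

lemma chain'_iff_arcs (R : Vtx → Vtx → Prop) :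
    ∀ L : List Vtx, List.Chain' R L ↔ ∀ a ∈ arcsOf L, R a.1 a.2 := by
  intro L
  induction L with
  | nil => simp [arcsOf_nil, List.Chain']
  | cons x l ih =>
    cases l with
    | nil => simp [arcsOf_single, List.Chain']
    | cons y l' =>
      unfold List.Chain' at ih ⊢
      rw [List.isChain_cons_cons, arcsOf_cons, ih]
      simp

lemma telescope (h : Vtx → ℤ) :
    ∀ (l : List Vtx) (x : Vtx),
      ((arcsOf (x :: l)).map (fun a => h a.2 - h a.1)).sum
        = h ((x :: l).getLast (by simp)) - h x := by
  intro l
  induction l with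
  | nil => intro x; simp [arcsOf_single]
  | cons y l' ih =>
    intro x
    rw [arcsOf_cons]
    simp only [List.map_cons, List.sum_cons, ih y]
    rw [List.getLast_cons (by simp : (y :: l') ≠ [])]
    ring

lemma not_nodup_split {α : Type*} :
    ∀ l : List α, ¬ l.Nodup → ∃ (l1 : List α) (r : α) (l2 l3 : List α),
      l = l1 ++ r :: l2 ++ r :: l3 := by
  intro l
  induction l with
  | nil => intro h; exact absurd List.nodup_nil h
  | cons a l ih =>
    intro h
    by_cases ha : a ∈ l
    · obtain ⟨s, t, rfl⟩ := List.append_of_mem ha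
      exact ⟨[], a, s, t, rfl⟩
    · have : ¬ l.Nodup := by
        intro hn; exact h (List.nodup_cons.mpr ⟨ha, hn⟩)
      obtain ⟨l1, r, l2, l3, rfl⟩ := ih this
      exact ⟨a :: l1, r, l2, l3, rfl⟩

lemma arcsOf_split :
    ∀ (X : List Vtx) (y : Vtx) (Z : List Vtx),
      arcsOf (X ++ y :: Z) = arcsOf (X ++ [y]) ++ arcsOf (y :: Z) := by
  intro X
  induction X with
  | nil => intro y Z; simp [arcsOf_single]
  | cons x X' ih =>
    intro y Z
    cases X' with
    | nil => simp [arcsOf_cons, arcsOf_single]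
    | cons x2 X'' =>
      have h1 : (x :: x2 :: X'') ++ y :: Z = x :: x2 :: (X'' ++ y :: Z) := by simp
      have h2 : (x :: x2 :: X'') ++ [y] = x :: x2 :: (X'' ++ [y]) := by simp
      rw [h1, h2, arcsOf_cons, arcsOf_cons]
      have h3 : x2 :: (X'' ++ y :: Z) = (x2 :: X'') ++ y :: Z := by simp
      have h4 : x2 :: (X'' ++ [y]) = (x2 :: X'') ++ [y] := by simp
      rw [h3, h4, ih y Z]
      simp

end Aux3
section Aux4

open Relation List

/-- every closed walk in `G_F` all of whose arcs carry the `t`-value of `hmin`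
has all its vertices pairwise critically equivalent -/
lemma walk_crit {F : Finset Vtx} {ef : GArc → ℤ} {hmin : Vtx → ℤ} :
    ∀ (n : ℕ) (L : List Vtx), L.length ≤ n → L ≠ [] → L.head? = L.getLast? →
      (∀ a ∈ arcsOf L, ArcF F a ∧ hmin a.2 - hmin a.1 = tArc F ef a) →
      ∀ x ∈ L, ∀ y ∈ L, Relation.EqvGen (critRel F ef) x y := by
  intro n
  induction n with
  | zero =>
    intro L hlen hne
    exact absurd (List.eq_nil_of_length_eq_zero (Nat.le_zero.mp hlen)) hne
  | succ n ih =>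
    intro L hlen hne hcl harcs
    by_cases hd : L.dropLast.Nodup
    · -- the walk is an elementary cycle, hence critical by telescoping
      obtain ⟨x0, l, rfl⟩ : ∃ x0 l, L = x0 :: l := by
        cases L with
        | nil => exact absurd rfl hne
        | cons a l => exact ⟨a, l, rfl⟩
      cases l with
      | nil =>
        intro x hx y hy
        simp only [List.mem_singleton] at hx hy
        rw [hx, hy]
        exact Relation.EqvGen.refl x0
      | cons x1 l' =>
        have hlast : (x0 :: x1 :: l').getLast (by simp) = x0 := by
          rw [List.getLast?_eq_getLast (l := x0 :: x1 :: l') (by simp)] at hcl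
          simp only [List.head?_cons, Option.some.injEq] at hcl
          exact hcl.symm
        have tsum : sumOn (tArc F ef) (x0 :: x1 :: l') = 0 := by
          unfold sumOn
          rw [List.map_congr_left (fun a ha => ((harcs a ha).2).symm)]
          rw [telescope hmin (x1 :: l') x0, hlast]
          ring
        have hcrit : CriticalCycle F ef (x0 :: x1 :: l') :=
          ⟨⟨⟨by simp, hcl, fun a ha => (harcs a ha).1⟩, hd⟩, tsum⟩
        intro x hx y hy
        exact Relation.EqvGen.rel x y ⟨x0 :: x1 :: l', hcrit, hx, hy⟩
    · -- split the walk at a repeated vertex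
      obtain ⟨l1, r, l2, l3, hdup⟩ := not_nodup_split _ hd
      set lastL := L.getLast hne with hlastL
      set T : List Vtx := l3 ++ [lastL] with hT
      have hL : L = l1 ++ (r :: (l2 ++ (r :: T))) := by
        conv_lhs => rw [← List.dropLast_append_getLast hne]
        rw [hdup]; simp [hT, hlastL]
      have harcsL : arcsOf L
          = arcsOf (l1 ++ [r]) ++ (arcsOf ((r :: l2) ++ [r]) ++ arcsOf (r :: T)) := by
        rw [hL, arcsOf_split l1 r (l2 ++ (r :: T))]
        congr 1
        rw [show r :: (l2 ++ (r :: T)) = (r :: l2) ++ (r :: T) from rfl,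
          arcsOf_split (r :: l2) r T]
      have harc1 : ∀ a ∈ arcsOf ((r :: l2) ++ [r]),
          ArcF F a ∧ hmin a.2 - hmin a.1 = tArc F ef a := by
        intro a ha
        exact harcs a (by rw [harcsL]; exact List.mem_append_right _ (List.mem_append_left _ ha))
      have harc2 : ∀ a ∈ arcsOf (l1 ++ (r :: T)),
          ArcF F a ∧ hmin a.2 - hmin a.1 = tArc F ef a := by
        intro a ha
        rw [arcsOf_split l1 r T] at ha
        rcases List.mem_append.mp ha with h | h
        · exact harcs a (by rw [harcsL]; exact List.mem_append_left _ h)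
        · exact harcs a (by rw [harcsL]; exact List.mem_append_right _ (List.mem_append_right _ h))
      have hlenL : L.length = l1.length + l2.length + l3.length + 3 := by
        rw [hL]; simp [hT]; omega
      have hlen1 : ((r :: l2) ++ [r]).length ≤ n := by simp; omega
      have hlen2 : (l1 ++ (r :: T)).length ≤ n := by simp [hT]; omega
      have hW1h : ((r :: l2) ++ [r]).head? = ((r :: l2) ++ [r]).getLast? := by
        rw [List.getLast?_append]
        simp
      have e1 : (l1 ++ (r :: T)).head? = L.head? := by
        rw [hL]; simp [List.head?_append]
      have e2 : (l1 ++ (r :: T)).getLast? = some lastL := by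
        rw [show l1 ++ (r :: T) = (l1 ++ r :: l3) ++ [lastL] by simp [hT],
          List.getLast?_append]
        simp
      have e2' : L.getLast? = some lastL := List.getLast?_eq_getLast hne
      have hW2h : (l1 ++ (r :: T)).head? = (l1 ++ (r :: T)).getLast? := by
        rw [e1, hcl, e2', e2]
      have ih1 := ih ((r :: l2) ++ [r]) hlen1 (by simp) hW1h harc1
      have ih2 := ih (l1 ++ (r :: T)) hlen2 (by simp) hW2h harc2
      have hr1 : r ∈ (r :: l2) ++ [r] := by simp
      have hr2 : r ∈ l1 ++ (r :: T) := by simp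
      have key : ∀ x ∈ L, Relation.EqvGen (critRel F ef) r x := by
        intro x hx
        rw [hL] at hx
        simp only [hT, List.mem_append, List.mem_cons, List.mem_singleton] at hx
        have hx' : x ∈ l1 ∨ x ∈ l2 ∨ x ∈ l3 ∨ x = r ∨ x = lastL := by tauto
        rcases hx' with h | h | h | h | h
        · exact ih2 r hr2 x (by simp [hT]; tauto)
        · exact ih1 r hr1 x (by simp; tauto)
        · exact ih2 r hr2 x (by simp [hT]; tauto)
        · rw [h]; exact Relation.EqvGen.refl r
        · exact ih2 r hr2 x (by simp [hT]; tauto)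
      intro x hx y hy
      exact Relation.EqvGen.trans _ _ _ (Relation.EqvGen.symm _ _ (key x hx)) (key y hy)

end Aux4
section Aux5

open Relation List

lemma eq_along_t {F : Finset Vtx} {ef : GArc → ℤ} {w0 : Vtx} {hmin hmax : Vtx → ℤ}
    (h2 : InHF F ef w0 hmax) (hd : ∀ x ∈ VF F, hmin x ≤ hmax x) :
    ∀ (l : List Vtx) (x : Vtx), List.Chain (TRel F ef hmin) x l → hmax x = hmin x →
      ∀ y ∈ x :: l, hmax y = hmin y := by
  intro l
  induction l with
  | nil =>
    intro x _ hx y hy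
    simp only [List.mem_singleton] at hy
    rw [hy]; exact hx
  | cons z l ih =>
    intro x hch hx y hy
    obtain ⟨⟨ha, ht⟩, hch'⟩ := List.chain_cons.mp hch
    have hz2 : z ∈ VF F := (arcF_mem_VF ha).2
    have hbt : hmax z - hmax x = bArc F ef (x, z) ∨ hmax z - hmax x = tArc F ef (x, z) :=
      h2.2 (x, z) ha
    have hble := b_le_t (F := F) (ef := ef) (x, z)
    have h3 := hd z hz2
    have hz : hmax z = hmin z := by rcases hbt with hb | ht2 <;> omega
    rcases List.mem_cons.mp hy with rfl | hy'
    · exact hx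
    · exact ih z hch' hz y hy'

lemma eq_along_b {F : Finset Vtx} {ef : GArc → ℤ} {w0 : Vtx} {hmin hmax : Vtx → ℤ}
    (h1 : InHF F ef w0 hmin) (hd : ∀ x ∈ VF F, hmin x ≤ hmax x) :
    ∀ (l : List Vtx) (x : Vtx), List.Chain (BRel F ef hmax) x l → hmax x = hmin x →
      ∀ y ∈ x :: l, hmax y = hmin y := by
  intro l
  induction l with
  | nil =>
    intro x _ hx y hy
    simp only [List.mem_singleton] at hy
    rw [hy]; exact hx
  | cons z l ih =>
    intro x hch hx y hy
    obtain ⟨⟨ha, hb⟩, hch'⟩ := List.chain_cons.mp hch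
    have hz2 : z ∈ VF F := (arcF_mem_VF ha).2
    have hbt : hmin z - hmin x = bArc F ef (x, z) ∨ hmin z - hmin x = tArc F ef (x, z) :=
      h1.2 (x, z) ha
    have hble := b_le_t (F := F) (ef := ef) (x, z)
    have h3 := hd z hz2
    have hz : hmax z = hmin z := by rcases hbt with hb2 | ht2 <;> omega
    rcases List.mem_cons.mp hy with rfl | hy'
    · exact hx
    · exact ih z hch' hz y hy'

lemma chain_transfer {F : Finset Vtx} {ef : GArc → ℤ} {hmin hmax : Vtx → ℤ} :
    ∀ (l : List Vtx) (x : Vtx), List.Chain (BRel F ef hmax) x l →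
      (∀ y ∈ x :: l, hmax y = hmin y) → List.Chain (BRel F ef hmin) x l := by
  intro l
  induction l with
  | nil => intro x _ _; exact List.Chain.nil
  | cons z l ih =>
    intro x hch heq
    obtain ⟨⟨ha, hb⟩, hch'⟩ := List.chain_cons.mp hch
    have ex := heq x (by simp)
    have ez := heq z (by simp)
    exact List.Chain.cons ⟨ha, by omega⟩
      (ih z hch' (fun y hy => heq y (List.mem_cons_of_mem _ hy)))

end Aux5
/-- the minimal and maximal height functions differ at every
vertex of every forced component distinct from `U_∞`. -/
theorem hmin_ne_hmax_on_forced_components (F : Finset Vtx) (hF : IsFigure F)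
    (ef : GArc → ℤ) (hef : IsEquilibrium F ef)
    (w0 : Vtx) (hw0 : OnOuterBoundary F w0)
    (hmin hmax : Vtx → ℤ)
    (h1 : InHF F ef w0 hmin) (h2 : InHF F ef w0 hmax)
    (hminle : ∀ h : Vtx → ℤ, InHF F ef w0 h → ∀ v ∈ VF F, hmin v ≤ h v)
    (hmaxge : ∀ h : Vtx → ℤ, InHF F ef w0 h → ∀ v ∈ VF F, h v ≤ hmax v)
    (S : Set Vtx) (hS : IsForcedComponent F ef S) (hSne : S ≠ fcomp F ef w0)
    (v : Vtx) (hv : v ∈ S) :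
    hmin v ≠ hmax v := by
  obtain ⟨v0, hv0, hSdef⟩ := hS
  intro hcon
  have hvS := hv
  rw [hSdef] at hvS
  obtain ⟨hvVF, hEq0⟩ := hvS
  have hd : ∀ x ∈ VF F, hmin x ≤ hmax x := hminle hmax h2
  have hsk := hef.1
  obtain ⟨l, hclh, hll⟩ :=
    List.exists_isChain_cons_of_relationReflTransGen (min_reach hsk h1 hminle v hvVF)
  obtain ⟨m, hcmh, hlm⟩ :=
    List.exists_isChain_cons_of_relationReflTransGen (max_reach hsk h2 hmaxge v hvVF)
  -- `hmax = hmin` on both chains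
  have heq2 : ∀ y ∈ v :: m, hmax y = hmin y := eq_along_b h1 hd m v hcmh hcon.symm
  -- turn the `hmax`-b-chain into an `hmin`-b-chain, then reverse it into a t-chain
  have hcm' : List.Chain (BRel F ef hmin) v m := chain_transfer m v hcmh heq2
  have hrev : List.Chain' (TRel F ef hmin) (v :: m).reverse := by
    apply List.isChain_reverse.mpr
    apply List.IsChain.imp ?_ (show List.Chain' (BRel F ef hmin) (v :: m) from hcm')
    intro a b hab
    refine ⟨arcF_rev (a := (a, b)) hab.1, ?_⟩
    have h5 := t_rev hsk (a := (a, b)) hab.1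
    have h6 := hab.2
    simp only [arev] at h5
    omega
  -- the reversed chain starts at `w0`
  have hrne : (v :: m).reverse ≠ [] := by simp
  have hrhead : ((v :: m).reverse).head? = some w0 := by
    rw [List.head?_reverse, List.getLast?_eq_getLast (l := v :: m) (by simp), hlm]
  obtain ⟨w, t', hM⟩ : ∃ w t', (v :: m).reverse = w :: t' := by
    cases hE : (v :: m).reverse with
    | nil => exact absurd hE (by simp)
    | cons w t' => exact ⟨w, t', rfl⟩
  have hw : w = w0 := by rw [hM] at hrhead; simpa using hrhead
  rw [hw] at hM
  -- assemble the closed walk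
  set D : List Vtx := (v :: l).dropLast with hD
  have hvl : v :: l = D ++ [w0] := by
    rw [hD, ← hll]
    exact (List.dropLast_append_getLast (by simp)).symm
  set L : List Vtx := (v :: l) ++ t' with hLdef
  have hL2 : L = D ++ (w0 :: t') := by rw [hLdef, hvl]; simp
  have harcsL : arcsOf L = arcsOf (v :: l) ++ arcsOf ((v :: m).reverse) := by
    rw [hL2, arcsOf_split D w0 t', ← hvl, hM]
  have harcs : ∀ a ∈ arcsOf L, ArcF F a ∧ hmin a.2 - hmin a.1 = tArc F ef a := by
    intro a ha
    rw [harcsL] at ha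
    rcases List.mem_append.mp ha with h | h
    · exact ((chain'_iff_arcs _ (v :: l)).mp hclh a h : TRel F ef hmin a.1 a.2)
    · exact ((chain'_iff_arcs _ _).mp hrev a h : TRel F ef hmin a.1 a.2)
  have hheadL : L.head? = some v := by rw [hLdef]; simp [List.head?_append]
  have hlastL : L.getLast? = some v := by
    rw [hL2, List.getLast?_append, show w0 :: t' = (v :: m).reverse from hM.symm,
      List.getLast?_reverse]
    simp
  have hvmem : v ∈ L := by rw [hLdef]; simp
  have hw0mem : w0 ∈ L := by
    rw [hLdef]
    exact List.mem_append_left _ (hll ▸ List.getLast_mem (by simp))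
  have hEqw : Relation.EqvGen (critRel F ef) w0 v :=
    walk_crit L.length L le_rfl (by rw [hLdef]; simp) (by rw [hheadL, hlastL]) harcs
      w0 hw0mem v hvmem
  -- conclude `S = fcomp F ef w0`, a contradiction
  apply hSne
  rw [hSdef]
  have h0 : Relation.EqvGen (critRel F ef) v0 w0 :=
    Relation.EqvGen.trans _ _ _ hEq0 (Relation.EqvGen.symm _ _ hEqw)
  ext x
  simp only [fcomp, Set.mem_setOf_eq]
  constructor
  · rintro ⟨hx1, hx2⟩
    exact ⟨hx1, Relation.EqvGen.trans _ _ _ (Relation.EqvGen.symm _ _ h0) hx2⟩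
  · rintro ⟨hx1, hx2⟩
    exact ⟨hx1, Relation.EqvGen.trans _ _ _ h0 hx2⟩
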